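/- Let J, a, b, τ be real numbers and H = J Z⊗Z + a Z⊗I + b I⊗Z. The syncopated pair (XX-CPMG, XXXX) — X pulses on qubit 0 after the first and third quarter-intervals and X pulses on qubit 1 after every quarter-interval, i.e., combined pulses X⊗X, I⊗X, X⊗X, I⊗X in time order — refocuses this Hamiltonian exactly: (I⊗X)·exp(−iτH)·(X⊗X)·exp(−iτH)·(I⊗X)·exp(−iτH)·(X⊗X)·exp(−iτH) = I⊗I, the 4×4 identity matrix, for every real τ. Together with the analogous identities for the pairs (XX-CPMG, XX) and (XX, XXXX), this shows that the three sequences XX, XX-CPMG and XXXX pairwise syncopate, so they suffice to remove all ZZ crosstalks on any 3-colorable crosstalk graph. -/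

import Mathlib

open Matrix Kronecker NormedSpace

noncomputable section

/-- Pauli X matrix. -/
def PX : Matrix (Fin 2) (Fin 2) ℂ := !![0, 1; 1, 0]
/-- Pauli Y matrix. -/
def PY : Matrix (Fin 2) (Fin 2) ℂ := !![0, -Complex.I; Complex.I, 0]
/-- Pauli Z matrix. -/
def PZ : Matrix (Fin 2) (Fin 2) ℂ := !![1, 0; 0, -1]
/-- 2×2 identity matrix. -/
def PI : Matrix (Fin 2) (Fin 2) ℂ := 1

/-- Two-qubit operators: 4×4 matrices indexed by `Fin 2 × Fin 2`. -/
abbrev Mat4 := Matrix (Fin 2 × Fin 2) (Fin 2 × Fin 2) ℂ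

/-- Sign function. -/
def zz : Fin 2 → ℂ := ![1, -1]
/-- Bit flip. -/
def σf : Fin 2 → Fin 2 := ![1, 0]

/-- Diagonal entries of `-(iτ) • H`. -/
def dd (J a b τ : ℝ) : Fin 2 × Fin 2 → ℂ :=
  fun p => -(Complex.I * τ) * (J * zz p.1 * zz p.2 + a * zz p.1 + b * zz p.2)

lemma PX_mul_PX : PX * PX = 1 := by
  ext i j
  fin_cases i <;> fin_cases j <;>
    simp [PX, Matrix.mul_apply, Fin.sum_univ_two, Matrix.one_apply]

lemma comm1 (v : Fin 2 × Fin 2 → ℂ) :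
    (PI ⊗ₖ PX) * Matrix.diagonal v =
      Matrix.diagonal (fun p => v (p.1, σf p.2)) * (PI ⊗ₖ PX) := by
  ext ⟨i, j⟩ ⟨k, l⟩
  fin_cases i <;> fin_cases j <;> fin_cases k <;> fin_cases l <;>
    simp [Matrix.mul_apply, Matrix.diagonal, PX, PI, σf,
      Fintype.sum_prod_type, Fin.sum_univ_two, Matrix.one_apply, Prod.ext_iff]

lemma comm2 (v : Fin 2 × Fin 2 → ℂ) :
    (PX ⊗ₖ PX) * Matrix.diagonal v =
      Matrix.diagonal (fun p => v (σf p.1, σf p.2)) * (PX ⊗ₖ PX) := by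
  ext ⟨i, j⟩ ⟨k, l⟩
  fin_cases i <;> fin_cases j <;> fin_cases k <;> fin_cases l <;>
    simp [Matrix.mul_apply, Matrix.diagonal, PX, PI, σf,
      Fintype.sum_prod_type, Fin.sum_univ_two, Matrix.one_apply, Prod.ext_iff]

lemma comm3 (v : Fin 2 × Fin 2 → ℂ) :
    (PX ⊗ₖ PI) * Matrix.diagonal v =
      Matrix.diagonal (fun p => v (σf p.1, p.2)) * (PX ⊗ₖ PI) := by
  ext ⟨i, j⟩ ⟨k, l⟩
  fin_cases i <;> fin_cases j <;> fin_cases k <;> fin_cases l <;>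
    simp [Matrix.mul_apply, Matrix.diagonal, PX, PI, σf,
      Fintype.sum_prod_type, Fin.sum_univ_two, Matrix.one_apply, Prod.ext_iff]

-- primed versions
lemma comm1' (v : Fin 2 × Fin 2 → ℂ) (M : Mat4) :
    (PI ⊗ₖ PX) * (Matrix.diagonal v * M) =
      Matrix.diagonal (fun p => v (p.1, σf p.2)) * ((PI ⊗ₖ PX) * M) := by
  rw [← mul_assoc, comm1, mul_assoc]

lemma comm2' (v : Fin 2 × Fin 2 → ℂ) (M : Mat4) :
    (PX ⊗ₖ PX) * (Matrix.diagonal v * M) =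
      Matrix.diagonal (fun p => v (σf p.1, σf p.2)) * ((PX ⊗ₖ PX) * M) := by
  rw [← mul_assoc, comm2, mul_assoc]

lemma comm3' (v : Fin 2 × Fin 2 → ℂ) (M : Mat4) :
    (PX ⊗ₖ PI) * (Matrix.diagonal v * M) =
      Matrix.diagonal (fun p => v (σf p.1, p.2)) * ((PX ⊗ₖ PI) * M) := by
  rw [← mul_assoc, comm3, mul_assoc]

lemma mul12 : (PI ⊗ₖ PX) * (PX ⊗ₖ PX) = (PX ⊗ₖ PI) := by
  rw [← Matrix.mul_kronecker_mul, PX_mul_PX]; simp [PI]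

lemma mul21 : (PX ⊗ₖ PX) * (PI ⊗ₖ PX) = (PX ⊗ₖ PI) := by
  rw [← Matrix.mul_kronecker_mul, PX_mul_PX]; simp [PI]

lemma mul13 : (PI ⊗ₖ PX) * (PX ⊗ₖ PI) = (PX ⊗ₖ PX) := by
  rw [← Matrix.mul_kronecker_mul]; simp [PI]

lemma mul31 : (PX ⊗ₖ PI) * (PI ⊗ₖ PX) = (PX ⊗ₖ PX) := by
  rw [← Matrix.mul_kronecker_mul]; simp [PI]

lemma mul23 : (PX ⊗ₖ PX) * (PX ⊗ₖ PI) = (PI ⊗ₖ PX) := by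
  rw [← Matrix.mul_kronecker_mul, PX_mul_PX]; simp [PI]

lemma mul32 : (PX ⊗ₖ PI) * (PX ⊗ₖ PX) = (PI ⊗ₖ PX) := by
  rw [← Matrix.mul_kronecker_mul, PX_mul_PX]; simp [PI]

lemma mul11 : (PI ⊗ₖ PX) * (PI ⊗ₖ PX) = 1 := by
  rw [← Matrix.mul_kronecker_mul, PX_mul_PX]; simp [PI, Matrix.one_kronecker_one]

lemma mul22 : (PX ⊗ₖ PX) * (PX ⊗ₖ PX) = 1 := by
  rw [← Matrix.mul_kronecker_mul, PX_mul_PX, Matrix.one_kronecker_one]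

lemma mul33 : (PX ⊗ₖ PI) * (PX ⊗ₖ PI) = 1 := by
  rw [← Matrix.mul_kronecker_mul, PX_mul_PX]; simp [PI, Matrix.one_kronecker_one]

lemma mul12' (M : Mat4) : (PI ⊗ₖ PX) * ((PX ⊗ₖ PX) * M) = (PX ⊗ₖ PI) * M := by
  rw [← mul_assoc, mul12]
lemma mul21' (M : Mat4) : (PX ⊗ₖ PX) * ((PI ⊗ₖ PX) * M) = (PX ⊗ₖ PI) * M := by
  rw [← mul_assoc, mul21]
lemma mul13' (M : Mat4) : (PI ⊗ₖ PX) * ((PX ⊗ₖ PI) * M) = (PX ⊗ₖ PX) * M := by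
  rw [← mul_assoc, mul13]
lemma mul31' (M : Mat4) : (PX ⊗ₖ PI) * ((PI ⊗ₖ PX) * M) = (PX ⊗ₖ PX) * M := by
  rw [← mul_assoc, mul31]
lemma mul23' (M : Mat4) : (PX ⊗ₖ PX) * ((PX ⊗ₖ PI) * M) = (PI ⊗ₖ PX) * M := by
  rw [← mul_assoc, mul23]
lemma mul32' (M : Mat4) : (PX ⊗ₖ PI) * ((PX ⊗ₖ PX) * M) = (PI ⊗ₖ PX) * M := by
  rw [← mul_assoc, mul32]
lemma mul11' (M : Mat4) : (PI ⊗ₖ PX) * ((PI ⊗ₖ PX) * M) = M := by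
  rw [← mul_assoc, mul11, one_mul]
lemma mul22' (M : Mat4) : (PX ⊗ₖ PX) * ((PX ⊗ₖ PX) * M) = M := by
  rw [← mul_assoc, mul22, one_mul]
lemma mul33' (M : Mat4) : (PX ⊗ₖ PI) * ((PX ⊗ₖ PI) * M) = M := by
  rw [← mul_assoc, mul33, one_mul]

theorem cpmg_with_xxxx_exactly_refocuses_and_pairwise_syncopation
    (J a b τ : ℝ) (H : Mat4)
    (hH : H = (J : ℂ) • (PZ ⊗ₖ PZ) + (a : ℂ) • (PZ ⊗ₖ PI) + (b : ℂ) • (PI ⊗ₖ PZ)) :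
    ((PI ⊗ₖ PX) * exp ((-(Complex.I * (τ : ℂ))) • H) *
      (PX ⊗ₖ PX) * exp ((-(Complex.I * (τ : ℂ))) • H) *
      (PI ⊗ₖ PX) * exp ((-(Complex.I * (τ : ℂ))) • H) *
      (PX ⊗ₖ PX) * exp ((-(Complex.I * (τ : ℂ))) • H) = PI ⊗ₖ PI) ∧
    ((PI ⊗ₖ PX) * exp ((-(Complex.I * (τ : ℂ))) • H) *
      (PX ⊗ₖ PI) * exp ((-(Complex.I * (τ : ℂ))) • H) *
      (PI ⊗ₖ PX) * exp ((-(Complex.I * (τ : ℂ))) • H) *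
      (PX ⊗ₖ PI) * exp ((-(Complex.I * (τ : ℂ))) • H) = PI ⊗ₖ PI) ∧
    ((PX ⊗ₖ PX) * exp ((-(Complex.I * (τ : ℂ))) • H) *
      (PI ⊗ₖ PX) * exp ((-(Complex.I * (τ : ℂ))) • H) *
      (PX ⊗ₖ PX) * exp ((-(Complex.I * (τ : ℂ))) • H) *
      (PI ⊗ₖ PX) * exp ((-(Complex.I * (τ : ℂ))) • H) = PI ⊗ₖ PI) := by
  have hD : (-(Complex.I * (τ : ℂ))) • H = Matrix.diagonal (dd J a b τ) := by
    ext ⟨i, j⟩ ⟨k, l⟩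
    fin_cases i <;> fin_cases j <;> fin_cases k <;> fin_cases l <;>
      simp [hH, dd, PZ, PI, zz, Matrix.diagonal, Matrix.one_apply, Prod.ext_iff]
  have hE : exp ((-(Complex.I * (τ : ℂ))) • H) =
      Matrix.diagonal (fun p => Complex.exp (dd J a b τ p)) := by
    rw [hD, Matrix.exp_diagonal, Pi.exp_def]
    simp [Complex.exp_eq_exp_ℂ]
  have hPI : PI ⊗ₖ PI = (1 : Mat4) := by simp [PI, Matrix.one_kronecker_one]
  set e : Fin 2 × Fin 2 → ℂ := fun p => Complex.exp (dd J a b τ p) with he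
  have key : ∀ x y z w : Fin 2 × Fin 2,
      dd J a b τ x + dd J a b τ y + dd J a b τ z + dd J a b τ w = 0 →
      e x * (e y * (e z * e w)) = 1 := by
    intro x y z w h
    rw [he]
    simp only
    rw [← Complex.exp_add, ← Complex.exp_add, ← Complex.exp_add]
    rw [show dd J a b τ x + (dd J a b τ y + (dd J a b τ z + dd J a b τ w)) =
        dd J a b τ x + dd J a b τ y + dd J a b τ z + dd J a b τ w by ring, h,
      Complex.exp_zero]
  have hsum : ∀ p : Fin 2 × Fin 2,
      dd J a b τ (p.1, σf p.2) + dd J a b τ (σf p.1, p.2) +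
        dd J a b τ (σf p.1, σf p.2) + dd J a b τ p = 0 := by
    intro ⟨i, j⟩
    fin_cases i <;> fin_cases j <;> simp [dd, zz, σf] <;> ring
  refine ⟨?_, ?_, ?_⟩
  · rw [hE, hPI]
    simp only [mul_assoc]
    rw [comm1', mul12', comm3', mul31', comm2', mul22',
      Matrix.diagonal_mul_diagonal, Matrix.diagonal_mul_diagonal,
      Matrix.diagonal_mul_diagonal]
    ext p q
    rw [Matrix.diagonal_apply, Matrix.one_apply]
    by_cases h : p = q
    · rw [if_pos h, if_pos h]
      exact key _ _ _ _ (by linear_combination hsum p)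
    · rw [if_neg h, if_neg h]
  · rw [hE, hPI]
    simp only [mul_assoc]
    rw [comm1', mul13', comm2', mul21', comm3', mul33',
      Matrix.diagonal_mul_diagonal, Matrix.diagonal_mul_diagonal,
      Matrix.diagonal_mul_diagonal]
    ext p q
    rw [Matrix.diagonal_apply, Matrix.one_apply]
    by_cases h : p = q
    · rw [if_pos h, if_pos h]
      exact key _ _ _ _ (by linear_combination hsum p)
    · rw [if_neg h, if_neg h]
  · rw [hE, hPI]
    simp only [mul_assoc]
    rw [comm2', mul21', comm3', mul32', comm1', mul11',
      Matrix.diagonal_mul_diagonal, Matrix.diagonal_mul_diagonal,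
      Matrix.diagonal_mul_diagonal]
    ext p q
    rw [Matrix.diagonal_apply, Matrix.one_apply]
    by_cases h : p = q
    · rw [if_pos h, if_pos h]
      exact key _ _ _ _ (by linear_combination hsum p)
    · rw [if_neg h, if_neg h]
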